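/- Let the hypersurface data (h, l, l2) with inverse data (P, n, n2) be given at a NULL point, i.e. n2 = 0 (so l(n) = 1 and h(n,·) = 0). Suppose two rigging transformations with gauge data (λ±, W±, Z±) satisfying λ± ≠ 0 and n2·W± + Z±(n) = 0 both act on this same data, producing l'± = λ±(l + Z±) and l2'± = (λ±)²(l2 + 2W± + P(Z±,Z±)). Then l'⁺ = l'⁻ and l2'⁺ = l2'⁻ if and only if λ⁺ = λ⁻, W⁺ = W⁻ and Z⁺ = Z⁻. -/
import Mathlib

/-- Uniqueness of rigging gauge fields at a NULL point (n2 = 0): the transformed rigging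
data from two gauge transformations agree iff the gauge fields agree. -/
theorem stmt_8
    (V : Type*) [AddCommGroup V] [Module ℝ V] [FiniteDimensional ℝ V]
    (h : V →ₗ[ℝ] V →ₗ[ℝ] ℝ) (hsymm : ∀ X Y : V, h X Y = h Y X)
    (l : Module.Dual ℝ V) (l2 : ℝ)
    (P : Module.Dual ℝ V →ₗ[ℝ] Module.Dual ℝ V →ₗ[ℝ] ℝ)
    (Psymm : ∀ ω χ : Module.Dual ℝ V, P ω χ = P χ ω)
    (n : V) (n2 : ℝ)
    (c1 : ∀ (ω : Module.Dual ℝ V) (X : V), P ω (h X) + ω n * l X = ω X)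
    (c2 : ∀ ω : Module.Dual ℝ V, P ω l + l2 * ω n = 0)
    (c3 : l n + n2 * l2 = 1)
    (c4 : ∀ X : V, h n X + n2 * l X = 0)
    (hnull : n2 = 0)
    (lamp lamm : ℝ) (hlp : lamp ≠ 0) (hlm : lamm ≠ 0)
    (Wp Wm : ℝ) (Zp Zm : Module.Dual ℝ V)
    (hcp : n2 * Wp + Zp n = 0) (hcm : n2 * Wm + Zm n = 0) :
    ((lamp • (l + Zp) = lamm • (l + Zm)) ∧
      (lamp ^ 2 * (l2 + 2 * Wp + P Zp Zp) = lamm ^ 2 * (l2 + 2 * Wm + P Zm Zm)))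
    ↔ (lamp = lamm ∧ Wp = Wm ∧ Zp = Zm) := by
  constructor
  · rintro ⟨h1, h2⟩
    have hZpn : Zp n = 0 := by simpa [hnull] using hcp
    have hZmn : Zm n = 0 := by simpa [hnull] using hcm
    have hln : l n = 1 := by simpa [hnull] using c3
    have hl : lamp = lamm := by
      have := LinearMap.congr_fun h1 n
      simpa [hZpn, hZmn, hln] using this
    have hZ : Zp = Zm := by
      rw [hl] at h1
      have := smul_right_injective (Module.Dual ℝ V) (hl ▸ hlp) h1
      exact add_left_cancel this
    refine ⟨hl, ?_, hZ⟩
    rw [hl, hZ] at h2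
    have := mul_left_cancel₀ (pow_ne_zero 2 hlm) h2
    linarith
  · rintro ⟨rfl, rfl, rfl⟩
    exact ⟨rfl, rfl⟩
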